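/- A Floyd–Auslander system (X,T) is minimal (every forward orbit is dense in X) if and only if there exist infinitely many n with |H₀(n)| > 0 and infinitely many m with |H₂(m)| > 0. -/

import Mathlib

open Filter Topology

noncomputable section

def lam0 : ℝ → ℝ := fun x => x / 2
def lam1 : ℝ → ℝ := fun x => x
def lam2 : ℝ → ℝ := fun x => x / 2 + 1 / 2

/-- The defining data of a Floyd–Auslander construction: a sequence `p` of
integers `≥ 2` and, for each `n` and `j ∈ [p n]`, a map `lam n j` which is one
of `lam0, lam1, lam2`. -/
structure FAData where
  p : ℕ → ℕ
  hp : ∀ n, 2 ≤ p n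
  lam : (n : ℕ) → Fin (p n) → ℝ → ℝ
  hlam : ∀ n j, lam n j = lam0 ∨ lam n j = lam1 ∨ lam n j = lam2

namespace FAData

variable (D : FAData)

abbrev Sigma : Type := ∀ n, Fin (D.p n)

def fin0 (n : ℕ) : Fin (D.p n) := ⟨0, by have := D.hp n; omega⟩

def finTop (n : ℕ) : Fin (D.p n) := ⟨D.p n - 1, by have := D.hp n; omega⟩

/-- Addition mod `p n`, as an element of `Fin (p n)`. -/
def modAdd (n : ℕ) (a b : ℕ) : Fin (D.p n) :=
  ⟨(a + b) % D.p n, Nat.mod_lt _ (by have := D.hp n; omega)⟩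

def Q (n : ℕ) : Set (Fin (D.p n)) := {j | D.lam n j = lam1}
def H0 (n : ℕ) : Set (Fin (D.p n)) := {j | D.lam n j = lam0}
def H2 (n : ℕ) : Set (Fin (D.p n)) := {j | D.lam n j = lam2}

/-- The carry entering position `n` when adding `1̲ = 10^∞` to `α`. -/
def carryIn (α : D.Sigma) : ℕ → ℕ
  | 0 => 1
  | n + 1 => if D.p n ≤ (α n).val + carryIn α n then 1 else 0

/-- The odometer add-one map `α ↦ α + 1̲`. -/
def addOne (α : D.Sigma) : D.Sigma := fun n => D.modAdd n (α n).val (D.carryIn α n)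

/-- `lamComp α n = λ¹_{α₁} ∘ … ∘ λⁿ_{α_n}` (with `lamComp α 0 = id`). -/
def lamComp (α : D.Sigma) : ℕ → ℝ → ℝ
  | 0 => id
  | n + 1 => lamComp α n ∘ D.lam n (α n)

/-- The space `X ⊆ Σ × ℝ` of the Floyd–Auslander construction. -/
def X : Set (D.Sigma × ℝ) :=
  {q | ∃ z ∈ Set.Icc (0 : ℝ) 1, Tendsto (fun n => D.lamComp q.1 n z) atTop (𝓝 q.2)}

/-- The fibre `L_α = ({α} × [0,1]) ∩ X`. -/
def Lfib (α : D.Sigma) : Set (D.Sigma × ℝ) := {q ∈ D.X | q.1 = α}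

/-- A fibre `L_α` is maximal if the length (diameter) of `π₂(L_α)` is maximal. -/
def IsMaximalFiber (α : D.Sigma) : Prop :=
  ∀ β : D.Sigma, Metric.diam (Prod.snd '' D.Lfib β) ≤ Metric.diam (Prod.snd '' D.Lfib α)

/-- A convenient subset `𝒜 ⊆ Σ`. -/
def Convenient (𝒜 : Set D.Sigma) : Prop :=
  ¬𝒜.Countable ∧ (∀ α ∈ 𝒜, D.IsMaximalFiber α) ∧
    ∃ q k k' : ℕ → ℕ, StrictMono q ∧ StrictMono k ∧ StrictMono k' ∧
      (∀ ℓ, ∃ ξ1 ξ2 : Fin (D.p (q ℓ)), ξ1 ∈ D.Q (q ℓ) ∧ ξ2 ∈ D.Q (q ℓ) ∧ ξ1 < ξ2 ∧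
        ∀ α ∈ 𝒜, α (q ℓ) = ξ1) ∧
      (∀ ℓ, (D.H2 (k ℓ)).Nonempty ∧ ∃ ζ ∈ D.Q (k ℓ), ∀ α ∈ 𝒜, α (k ℓ) = ζ) ∧
      (∀ ℓ, (D.H0 (k' ℓ)).Nonempty ∧ ∃ ζ ∈ D.Q (k' ℓ), ∀ α ∈ 𝒜, α (k' ℓ) = ζ)

/-- Condition (A). -/
def CondA : Prop :=
  ∃ ns : ℕ → ℕ, StrictMono ns ∧ ∀ ℓ, 2 ≤ (D.Q (ns ℓ)).ncard ∧
    ∃ a0 a1 : Fin (D.p (ns ℓ)), a0 ∈ D.Q (ns ℓ) ∧ a1 ∈ D.Q (ns ℓ) ∧ a0 ≠ a1 ∧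
      ∃ Δ : Fin (D.p (ns ℓ)),
        D.modAdd (ns ℓ) a0.val Δ.val ∈ D.H0 (ns ℓ) ∧
        D.modAdd (ns ℓ) a1.val Δ.val ∈ D.H2 (ns ℓ)

/-- Condition (B). -/
def CondB : Prop :=
  ∃ ns : ℕ → ℕ, StrictMono ns ∧ ∀ ℓ, 2 ≤ (D.Q (ns ℓ)).ncard ∧
    ∀ a0 a1 : Fin (D.p (ns ℓ)), a0 ∈ D.Q (ns ℓ) → a1 ∈ D.Q (ns ℓ) → a0 ≠ a1 →
      ∀ j : Fin (D.p (ns ℓ)),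
        (D.modAdd (ns ℓ) a0.val j.val ∈ D.H0 (ns ℓ) ↔
          D.modAdd (ns ℓ) a1.val j.val ∈ D.H0 (ns ℓ)) ∧
        (D.modAdd (ns ℓ) a0.val j.val ∈ D.H2 (ns ℓ) ↔
          D.modAdd (ns ℓ) a1.val j.val ∈ D.H2 (ns ℓ))

/-- Condition (C). -/
def CondC : Prop :=
  ∃ ns : ℕ → ℕ, StrictMono ns ∧ ∀ ℓ, 2 ≤ (D.Q (ns ℓ)).ncard ∧
    ∃ a0 a1 : Fin (D.p (ns ℓ)), a0 ∈ D.Q (ns ℓ) ∧ a1 ∈ D.Q (ns ℓ) ∧ a0 ≠ a1 ∧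
      ∃ Δ : Fin (D.p (ns ℓ)), ∃ h : a0.val + Δ.val < D.p (ns ℓ),
        (⟨a0.val + Δ.val, h⟩ : Fin (D.p (ns ℓ))) ∈ D.Q (ns ℓ) ∧
        D.modAdd (ns ℓ) a1.val Δ.val ∈ D.H0 (ns ℓ) ∪ D.H2 (ns ℓ)

end FAData

namespace FAData
variable {D : FAData}
/-- Partial composition of levels `i ∈ [n, m)`. -/
def seg (D : FAData) (α : D.Sigma) (n : ℕ) : ℕ → ℝ → ℝ
  | 0 => id
  | m + 1 => if n ≤ m then seg D α n m ∘ D.lam m (α m) else id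


lemma seg_succ (α : D.Sigma) {n m : ℕ} (h : n ≤ m) :
    D.seg α n (m + 1) = D.seg α n m ∘ D.lam m (α m) := by
  simp [seg, h]

lemma seg_of_le (α : D.Sigma) {n m : ℕ} (h : m ≤ n) : D.seg α n m = id := by
  cases m with
  | zero => rfl
  | succ m => simp [seg, Nat.not_le.mpr (Nat.lt_of_succ_le h)]

lemma lamComp_eq_seg (α : D.Sigma) (m : ℕ) : D.lamComp α m = D.seg α 0 m := by
  induction m with
  | zero => rfl
  | succ m ih => simp [lamComp, seg, ih]

lemma seg_comp (α : D.Sigma) {n m k : ℕ} (h1 : n ≤ m) (h2 : m ≤ k) :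
    D.seg α n k = D.seg α n m ∘ D.seg α m k := by
  induction k with
  | zero =>
      have : m = 0 := Nat.le_zero.mp h2
      subst this
      simp [seg_of_le α h1, seg]
  | succ k ih =>
      rcases Nat.lt_or_ge m (k+1) with h | h
      · have hm : m ≤ k := Nat.lt_succ_iff.mp h
        rw [seg_succ α (h1.trans hm), seg_succ α hm, ih hm]
        rfl
      · have : k + 1 ≤ m := h
        have hm : m = k + 1 := le_antisymm h2 this
        subst hm
        rw [seg_of_le α le_rfl]
        rfl

lemma seg_congr {α β : D.Sigma} {n m : ℕ} (h : ∀ i, n ≤ i → i < m → α i = β i) :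
    D.seg α n m = D.seg β n m := by
  induction m with
  | zero => rfl
  | succ m ih =>
      rcases le_or_gt n m with hnm | hnm
      · rw [seg_succ α hnm, seg_succ β hnm, h m hnm (Nat.lt_succ_self m),
          ih (fun i h1 h2 => h i h1 (h2.trans (Nat.lt_succ_self m)))]
      · rw [seg_of_le α hnm, seg_of_le β hnm]

lemma lam_mapsTo (n : ℕ) (j : Fin (D.p n)) :
    Set.MapsTo (D.lam n j) (Set.Icc (0:ℝ) 1) (Set.Icc (0:ℝ) 1) := by
  rcases D.hlam n j with h | h | h <;> rw [h] <;> intro x hx <;>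
    simp only [lam0, lam1, lam2, Set.mem_Icc] at * <;> constructor <;> linarith [hx.1, hx.2]

lemma seg_mapsTo (α : D.Sigma) (n m : ℕ) :
    Set.MapsTo (D.seg α n m) (Set.Icc (0:ℝ) 1) (Set.Icc (0:ℝ) 1) := by
  induction m with
  | zero => exact fun x hx => hx
  | succ m ih =>
      rcases le_or_gt n m with hnm | hnm
      · rw [seg_succ α hnm]; exact ih.comp (lam_mapsTo m (α m))
      · rw [seg_of_le α hnm]; exact fun x hx => hx

lemma seg_affine (α : D.Sigma) (n m : ℕ) :
    ∃ a b : ℝ, 0 < a ∧ a ≤ 1 ∧ ∀ x, D.seg α n m x = a * x + b := by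
  induction m with
  | zero => exact ⟨1, 0, one_pos, le_rfl, fun x => by simp [seg]⟩
  | succ m ih =>
      rcases le_or_gt n m with hnm | hnm
      · obtain ⟨a, b, ha, ha1, hab⟩ := ih
        rw [seg_succ α hnm]
        rcases D.hlam m (α m) with h | h | h <;> rw [h]
        · exact ⟨a/2, b, by linarith, by linarith, fun x => by
            simp only [Function.comp_apply, lam0, hab]; ring⟩
        · exact ⟨a, b, ha, ha1, fun x => by simp [lam1, hab]⟩
        · exact ⟨a/2, a/2 + b, by linarith, by linarith, fun x => by
            simp only [Function.comp_apply, lam2, hab]; ring⟩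
      · exact ⟨1, 0, one_pos, le_rfl, fun x => by simp [seg_of_le α hnm]⟩

/-- diameter coefficient -/
def A (α : D.Sigma) (n m : ℕ) : ℝ := D.seg α n m 1 - D.seg α n m 0

lemma A_eq (α : D.Sigma) (n m : ℕ) {a b : ℝ} (hab : ∀ x, D.seg α n m x = a * x + b) :
    D.A α n m = a := by
  simp [A, hab 0, hab 1]

lemma A_pos (α : D.Sigma) (n m : ℕ) : 0 < D.A α n m := by
  obtain ⟨a, b, ha, _, hab⟩ := seg_affine α n m
  rw [A_eq α n m hab]; exact ha

lemma A_le_one (α : D.Sigma) (n m : ℕ) : D.A α n m ≤ 1 := by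
  obtain ⟨a, b, _, ha1, hab⟩ := seg_affine α n m
  rw [A_eq α n m hab]; exact ha1

lemma abs_seg_sub_seg (α : D.Sigma) (n m : ℕ) {x y : ℝ} (hx : x ∈ Set.Icc (0:ℝ) 1)
    (hy : y ∈ Set.Icc (0:ℝ) 1) : |D.seg α n m x - D.seg α n m y| ≤ D.A α n m := by
  obtain ⟨a, b, ha, _, hab⟩ := seg_affine α n m
  rw [A_eq α n m hab, hab, hab]
  have : a * x + b - (a * y + b) = a * (x - y) := by ring
  rw [this, abs_mul, abs_of_pos ha]
  nlinarith [abs_le.mpr (⟨by linarith [hx.1, hy.2], by linarith [hx.2, hy.1]⟩ :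
    -1 ≤ x - y ∧ x - y ≤ 1), abs_nonneg (x - y)]

lemma A_antitone (α : D.Sigma) (n : ℕ) {m m' : ℕ} (h1 : n ≤ m) (h2 : m ≤ m') :
    D.A α n m' ≤ D.A α n m := by
  have h0 : (0:ℝ) ∈ Set.Icc (0:ℝ) 1 := by norm_num
  have h1' : (1:ℝ) ∈ Set.Icc (0:ℝ) 1 := by norm_num
  have := abs_seg_sub_seg α n m (seg_mapsTo α m m' h1') (seg_mapsTo α m m' h0)
  calc D.A α n m' = |D.seg α n m' 1 - D.seg α n m' 0| := by
        rw [abs_of_pos]; · rfl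
        · exact A_pos α n m'
    _ ≤ D.A α n m := by
        rw [seg_comp α h1 h2]
        exact this

lemma seg_halves (α : D.Sigma) {n m : ℕ} (h1 : n ≤ m) (h : D.lam m (α m) ≠ lam1) :
    D.A α n (m+1) = D.A α n m / 2 := by
  obtain ⟨a, b, ha, _, hab⟩ := seg_affine α n m
  rw [A_eq α n m hab]
  rcases D.hlam m (α m) with hl | hl | hl
  · have : ∀ x, D.seg α n (m+1) x = (a/2) * x + b := by
      intro x
      rw [seg_succ α h1, Function.comp_apply, hl]
      simp only [lam0, hab]; ring
    rw [A_eq α n (m+1) this]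
  · exact absurd hl h
  · have : ∀ x, D.seg α n (m+1) x = (a/2) * x + (a/2 + b) := by
      intro x
      rw [seg_succ α h1, Function.comp_apply, hl]
      simp only [lam2, hab]; ring
    rw [A_eq α n (m+1) this]

lemma seg_id_of_lam1 (α : D.Sigma) {n m : ℕ}
    (h : ∀ i, n ≤ i → i < m → D.lam i (α i) = lam1) : D.seg α n m = id := by
  induction m with
  | zero => rfl
  | succ m ih =>
      rcases le_or_gt n m with hnm | hnm
      · rw [seg_succ α hnm, h m hnm (Nat.lt_succ_self m),
          ih (fun i h1 h2 => h i h1 (h2.trans (Nat.lt_succ_self m)))]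
        rfl
      · exact seg_of_le α hnm


lemma seg_tendsto (α : D.Sigma) (n : ℕ) {z : ℝ} (hz : z ∈ Set.Icc (0:ℝ) 1) :
    ∃ y ∈ Set.Icc (0:ℝ) 1, Tendsto (fun m => D.seg α n m z) atTop (𝓝 y) := by
  have key : ∀ m m', n ≤ m → m ≤ m' → |D.seg α n m' z - D.seg α n m z| ≤ D.A α n m := by
    intro m m' h1 h2
    rw [seg_comp α h1 h2]
    exact abs_seg_sub_seg α n m (seg_mapsTo α m m' hz) hz
  have hconv : ∃ y, Tendsto (fun m => D.seg α n m z) atTop (𝓝 y) := by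
    by_cases hfin : {i : ℕ | n ≤ i ∧ D.lam i (α i) ≠ lam1}.Finite
    · -- eventually constant
      obtain ⟨N, hN⟩ := hfin.bddAbove
      refine ⟨D.seg α n (max n (N+1)) z, tendsto_atTop_of_eventually_const
        (i₀ := max n (N+1)) fun m hm => ?_⟩
      rw [seg_comp α (le_max_left _ _) hm, Function.comp_apply]
      have : D.seg α (max n (N+1)) m = id := by
        apply seg_id_of_lam1
        intro i h1 h2
        by_contra hne
        have : i ≤ N := hN ⟨le_trans (le_max_left _ _) h1, hne⟩
        omega
      rw [this]; rfl
    · -- infinitely many contractions: A → 0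
      have hfin : {i : ℕ | n ≤ i ∧ D.lam i (α i) ≠ lam1}.Infinite := hfin
      have hA0 : ∀ k : ℕ, ∃ m, n ≤ m ∧ D.A α n m ≤ (1/2)^k := by
        intro k
        induction k with
        | zero => exact ⟨n, le_rfl, by simpa using A_le_one α n n⟩
        | succ k ih =>
            obtain ⟨m, hnm, hm⟩ := ih
            obtain ⟨i, hi, hige⟩ := hfin.exists_gt m
            have hni : n ≤ i := le_trans hnm (le_of_lt hige)
            refine ⟨i + 1, by omega, ?_⟩
            rw [seg_halves α hni hi.2]
            have := A_antitone α n hnm (le_of_lt hige)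
            calc D.A α n i / 2 ≤ (1/2)^k / 2 := by linarith
              _ = (1/2)^(k+1) := by ring
      apply cauchySeq_tendsto_of_complete
      rw [Metric.cauchySeq_iff']
      intro ε hε
      obtain ⟨k, hk⟩ := exists_pow_lt_of_lt_one hε (by norm_num : (1/2 : ℝ) < 1)
      obtain ⟨m, hnm, hm⟩ := hA0 k
      refine ⟨m, fun m' hm' => ?_⟩
      rw [Real.dist_eq]
      calc |D.seg α n m' z - D.seg α n m z| ≤ D.A α n m := key m m' hnm hm'
        _ ≤ (1/2)^k := hm
        _ < ε := hk
  obtain ⟨y, hy⟩ := hconv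
  refine ⟨y, ?_, hy⟩
  exact isClosed_Icc.mem_of_tendsto hy (Eventually.of_forall fun m => seg_mapsTo α n m hz)

/-- The limit of the partial compositions from level `n`, evaluated at `z`. -/
def segPhi (α : D.Sigma) (n : ℕ) (z : ℝ) : ℝ := limUnder atTop (fun m => D.seg α n m z)

lemma segPhi_tendsto (α : D.Sigma) (n : ℕ) {z : ℝ} (hz : z ∈ Set.Icc (0:ℝ) 1) :
    Tendsto (fun m => D.seg α n m z) atTop (𝓝 (segPhi α n z)) := by
  obtain ⟨y, _, hy⟩ := seg_tendsto α n hz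
  rwa [segPhi, hy.limUnder_eq]

lemma segPhi_mem (α : D.Sigma) (n : ℕ) {z : ℝ} (hz : z ∈ Set.Icc (0:ℝ) 1) :
    segPhi α n z ∈ Set.Icc (0:ℝ) 1 := by
  obtain ⟨y, hym, hy⟩ := seg_tendsto α n hz
  rwa [segPhi, hy.limUnder_eq]

/-- The limit of `lamComp α m z`. -/
def phi (α : D.Sigma) (z : ℝ) : ℝ := segPhi α 0 z

lemma phi_tendsto (α : D.Sigma) {z : ℝ} (hz : z ∈ Set.Icc (0:ℝ) 1) :
    Tendsto (fun m => D.lamComp α m z) atTop (𝓝 (phi α z)) := by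
  have := segPhi_tendsto α 0 hz
  simpa only [lamComp_eq_seg, phi] using this

lemma phi_mem_X (α : D.Sigma) {z : ℝ} (hz : z ∈ Set.Icc (0:ℝ) 1) :
    (α, phi α z) ∈ D.X := ⟨z, hz, phi_tendsto α hz⟩

lemma seg_continuous (α : D.Sigma) (n m : ℕ) : Continuous (D.seg α n m) := by
  obtain ⟨a, b, _, _, hab⟩ := seg_affine α n m
  have : D.seg α n m = fun x => a * x + b := funext hab
  rw [this]; continuity

/-- Factorization of the limit through a finite prefix. -/
lemma segPhi_factor (α : D.Sigma) {n k : ℕ} (h : n ≤ k) {z : ℝ} (hz : z ∈ Set.Icc (0:ℝ) 1) :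
    segPhi α n z = D.seg α n k (segPhi α k z) := by
  have h1 : Tendsto (fun m => D.seg α n k (D.seg α k m z)) atTop
      (𝓝 (D.seg α n k (segPhi α k z))) :=
    ((seg_continuous α n k).tendsto _).comp (segPhi_tendsto α k hz)
  have h2 : Tendsto (fun m => D.seg α n m z) atTop (𝓝 (D.seg α n k (segPhi α k z))) := by
    apply h1.congr'
    filter_upwards [eventually_ge_atTop k] with m hm
    rw [seg_comp α h hm]; rfl
  exact tendsto_nhds_unique (segPhi_tendsto α n hz) h2

lemma phi_factor (α : D.Sigma) (k : ℕ) {z : ℝ} (hz : z ∈ Set.Icc (0:ℝ) 1) :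
    phi α z = D.seg α 0 k (segPhi α k z) := segPhi_factor α (Nat.zero_le k) hz

end FAData


namespace FAData
variable {D : FAData}

/-- `P M = p 0 * ... * p (M-1)`. -/
def Pprod (D : FAData) (M : ℕ) : ℕ := ∏ i ∈ Finset.range M, D.p i

/-- mixed-radix value of the first `M` digits. -/
def Nval (D : FAData) (γ : D.Sigma) (M : ℕ) : ℕ :=
  ∑ i ∈ Finset.range M, (γ i).val * D.Pprod i

lemma Pprod_pos (M : ℕ) : 0 < D.Pprod M :=
  Finset.prod_pos fun i _ => by have := D.hp i; omega

lemma Pprod_succ (M : ℕ) : D.Pprod (M+1) = D.Pprod M * D.p M := Finset.prod_range_succ _ _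

lemma Nval_succ (γ : D.Sigma) (M : ℕ) :
    D.Nval γ (M+1) = D.Nval γ M + (γ M).val * D.Pprod M := Finset.sum_range_succ _ _

lemma Nval_lt (γ : D.Sigma) (M : ℕ) : D.Nval γ M < D.Pprod M := by
  induction M with
  | zero => simpa [Nval, Pprod] using Nat.zero_lt_one
  | succ M ih =>
      rw [Nval_succ, Pprod_succ]
      have h1 : (γ M).val + 1 ≤ D.p M := (γ M).isLt
      nlinarith [Pprod_pos (D := D) M]

lemma carryIn_le_one (γ : D.Sigma) (n : ℕ) : D.carryIn γ n ≤ 1 := by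
  cases n with
  | zero => exact le_refl 1
  | succ n => rw [carryIn]; split <;> omega

lemma addOne_apply (γ : D.Sigma) (n : ℕ) :
    (D.addOne γ n).val = ((γ n).val + D.carryIn γ n) % D.p n := rfl

lemma addOne_Nval (γ : D.Sigma) (M : ℕ) :
    D.Nval (D.addOne γ) M + D.carryIn γ M * D.Pprod M = D.Nval γ M + 1 := by
  induction M with
  | zero => simp [Nval, Pprod, carryIn]
  | succ M ih =>
      have hc : D.carryIn γ M ≤ 1 := carryIn_le_one γ M
      have hg : (γ M).val < D.p M := (γ M).isLt
      have hp : 2 ≤ D.p M := D.hp M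
      rw [Nval_succ, Nval_succ, Pprod_succ, addOne_apply]
      rw [show D.carryIn γ (M+1) = if D.p M ≤ (γ M).val + D.carryIn γ M then 1 else 0 from rfl]
      by_cases h : D.p M ≤ (γ M).val + D.carryIn γ M
      · have hmod : ((γ M).val + D.carryIn γ M) % D.p M
            = (γ M).val + D.carryIn γ M - D.p M := by
          rw [Nat.mod_eq_sub_mod h, Nat.mod_eq_of_lt (by omega)]
        rw [if_pos h, hmod]
        have hsub : ((γ M).val + D.carryIn γ M - D.p M) * D.Pprod M + D.p M * D.Pprod M
            = ((γ M).val + D.carryIn γ M) * D.Pprod M := by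
          rw [← Nat.add_mul]
          congr 1
          omega
        nlinarith [ih, hsub]
      · have hmod : ((γ M).val + D.carryIn γ M) % D.p M = (γ M).val + D.carryIn γ M :=
          Nat.mod_eq_of_lt (by omega)
        rw [if_neg h, hmod]
        nlinarith [ih]

lemma addOne_Nval_mod (γ : D.Sigma) (M : ℕ) :
    D.Nval (D.addOne γ) M % D.Pprod M = (D.Nval γ M + 1) % D.Pprod M := by
  conv_rhs => rw [← addOne_Nval γ M]
  rw [Nat.add_mul_mod_self_right]

lemma iterate_addOne_Nval (γ : D.Sigma) (M n : ℕ) :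
    D.Nval (D.addOne^[n] γ) M % D.Pprod M = (D.Nval γ M + n) % D.Pprod M := by
  induction n with
  | zero => simp
  | succ n ih =>
      rw [Function.iterate_succ_apply', addOne_Nval_mod, ← Nat.mod_add_mod, ih,
        Nat.mod_add_mod, Nat.add_assoc]

lemma Nval_inj (γ β : D.Sigma) (M : ℕ) (h : D.Nval γ M = D.Nval β M) :
    ∀ i < M, γ i = β i := by
  induction M with
  | zero => omega
  | succ M ih =>
      have hγ := Nval_lt (D := D) γ M
      have hβ := Nval_lt (D := D) β M
      rw [Nval_succ, Nval_succ] at h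
      have hP := Pprod_pos (D := D) M
      have hdig : (γ M).val = (β M).val := by
        have h1 : (D.Nval γ M + (γ M).val * D.Pprod M) / D.Pprod M = (γ M).val := by
          rw [Nat.add_mul_div_right _ _ hP, Nat.div_eq_of_lt hγ, Nat.zero_add]
        have h2 : (D.Nval β M + (β M).val * D.Pprod M) / D.Pprod M = (β M).val := by
          rw [Nat.add_mul_div_right _ _ hP, Nat.div_eq_of_lt hβ, Nat.zero_add]
        rw [← h1, ← h2, h]
      have hrest : D.Nval γ M = D.Nval β M := by nlinarith
      intro i hi
      rcases Nat.lt_succ_iff_lt_or_eq.mp hi with hi | hi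
      · exact ih hrest i hi
      · subst hi; exact Fin.ext hdig

/-- The odometer orbit of any point enters any cylinder. -/
lemma exists_iterate_agree (α β : D.Sigma) (M : ℕ) :
    ∃ n : ℕ, ∀ i < M, (D.addOne^[n] α) i = β i := by
  refine ⟨D.Pprod M - D.Nval α M + D.Nval β M, ?_⟩
  apply Nval_inj _ _ M
  have hα := Nval_lt (D := D) α M
  have hβ := Nval_lt (D := D) β M
  have h1 : D.Nval α M + (D.Pprod M - D.Nval α M + D.Nval β M)
      = D.Pprod M + D.Nval β M := by omega
  have := iterate_addOne_Nval (D := D) α M (D.Pprod M - D.Nval α M + D.Nval β M)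
  rw [h1] at this
  rw [Nat.mod_eq_of_lt (Nval_lt _ _)] at this
  rw [this, Nat.add_mod_left, Nat.mod_eq_of_lt hβ]

end FAData


/-- A Floyd–Auslander system: the data of the construction together with the
skew-product map `T`, the continuity conditions (i) and the condition (ii) that
`Q n = ∅` for at most finitely many `n`. -/
structure FASystem extends FAData where
  T : toFAData.X → toFAData.X
  hT : ∀ (α : toFAData.Sigma) (z y y' : ℝ), z ∈ Set.Icc (0 : ℝ) 1 →
    Tendsto (fun n => toFAData.lamComp α n z) atTop (𝓝 y) →
    Tendsto (fun n => toFAData.lamComp (toFAData.addOne α) n z) atTop (𝓝 y') →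
    ∀ hq : (α, y) ∈ toFAData.X,
      (T ⟨(α, y), hq⟩ : toFAData.Sigma × ℝ) = (toFAData.addOne α, y')
  infLeft : {n : ℕ | toFAData.lam n (toFAData.fin0 n) = lam0 ∨
      toFAData.lam n (toFAData.fin0 n) = lam2}.Infinite
  infRight : {n : ℕ | toFAData.lam n (toFAData.finTop n) = lam0 ∨
      toFAData.lam n (toFAData.finTop n) = lam2}.Infinite
  Qfin : {n : ℕ | toFAData.Q n = ∅}.Finite

namespace FASystem

variable (S : FASystem)

/-- The (forward) Ellis semigroup `E(X)`: the closure of `{Tⁿ : n ≥ 1}` in `X^X`. -/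
def Ellis : Set (S.toFAData.X → S.toFAData.X) :=
  closure (Set.range fun n : ℕ => S.T^[n + 1])

/-- The set of idempotents `J(X)` of the Ellis semigroup. -/
def J : Set (S.toFAData.X → S.toFAData.X) := {f | f ∈ S.Ellis ∧ f ∘ f = f}

/-- The set of minimal idempotents `J^min(X)` (minimal for `e ≤ f ↔ e = e ∘ f`). -/
def Jmin : Set (S.toFAData.X → S.toFAData.X) :=
  {f | f ∈ S.J ∧ ∀ e ∈ S.J, e = e ∘ f → e = f}

/-- `(X,T)` is minimal: every forward orbit is dense. -/
def Minimal : Prop := ∀ x : S.toFAData.X, Dense (Set.range fun n : ℕ => S.T^[n] x)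

/-- Property (∗). -/
def PropertyStar : Prop :=
  ∃ a ∈ Set.Ioo (0 : ℝ) 1, ∃ 𝒜 : Set S.toFAData.Sigma, S.toFAData.Convenient 𝒜 ∧
    ((∀ B ⊆ 𝒜, ∃ f ∈ S.J, ∃ B1 B2 : Set S.toFAData.Sigma, B1 ∪ B2 = B ∧ Disjoint B1 B2 ∧
        (∀ α ∈ 𝒜 \ B, ∃ b ∈ Set.Icc (0 : ℝ) a, ∀ q : S.toFAData.X,
          (q : S.toFAData.Sigma × ℝ).1 = α → (f q : S.toFAData.Sigma × ℝ) = (α, b)) ∧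
        (∀ α ∈ B1, ∃ c : ℝ, a < c ∧ ∀ q : S.toFAData.X,
          (q : S.toFAData.Sigma × ℝ).1 = α → (f q : S.toFAData.Sigma × ℝ) = (α, c)) ∧
        (∀ α ∈ B2, ∀ q : S.toFAData.X, (q : S.toFAData.Sigma × ℝ).1 = α → f q = q)) ∨
     (∀ B ⊆ 𝒜, ∃ f ∈ S.J, ∃ B1 B2 : Set S.toFAData.Sigma, B1 ∪ B2 = B ∧ Disjoint B1 B2 ∧
        (∀ α ∈ 𝒜 \ B, ∃ b ∈ Set.Icc a (1 : ℝ), ∀ q : S.toFAData.X,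
          (q : S.toFAData.Sigma × ℝ).1 = α → (f q : S.toFAData.Sigma × ℝ) = (α, b)) ∧
        (∀ α ∈ B1, ∃ c : ℝ, c < a ∧ ∀ q : S.toFAData.X,
          (q : S.toFAData.Sigma × ℝ).1 = α → (f q : S.toFAData.Sigma × ℝ) = (α, c)) ∧
        (∀ α ∈ B2, ∀ q : S.toFAData.X, (q : S.toFAData.Sigma × ℝ).1 = α → f q = q)))

end FASystem

namespace FAData
variable {D : FAData}

lemma lam_of_Q {n : ℕ} {j : Fin (D.p n)} (h : j ∈ D.Q n) : D.lam n j = lam1 := h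
lemma lam_of_H0 {n : ℕ} {j : Fin (D.p n)} (h : j ∈ D.H0 n) : D.lam n j = lam0 := h
lemma lam_of_H2 {n : ℕ} {j : Fin (D.p n)} (h : j ∈ D.H2 n) : D.lam n j = lam2 := h

/-- Digit design: using infinitely many `H0` and `H2` levels and `Q` digits
elsewhere, a block can approximate any target value. -/
lemma design {N₀ : ℕ}
    (hH0 : ∀ M, ∃ i, M ≤ i ∧ (D.H0 i).Nonempty)
    (hH2 : ∀ M, ∃ i, M ≤ i ∧ (D.H2 i).Nonempty)
    (hQ : ∀ i, N₀ ≤ i → (D.Q i).Nonempty) :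
    ∀ k : ℕ, ∀ w ∈ Set.Icc (0:ℝ) 1, ∀ M, N₀ ≤ M → ∃ K, M ≤ K ∧ ∃ δ : D.Sigma,
      ∀ x ∈ Set.Icc (0:ℝ) 1, |D.seg δ M K x - w| ≤ (1/2)^k := by
  obtain ⟨qdig, qdig_mem⟩ : ∃ qd : ∀ m : ℕ, Fin (D.p m), ∀ m, N₀ ≤ m → qd m ∈ D.Q m := by
    refine ⟨fun m => if h : N₀ ≤ m then (hQ m h).some else D.fin0 m, fun m h => ?_⟩
    simp only [dif_pos h]
    exact (hQ m h).some_mem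
  intro k
  induction k with
  | zero =>
      intro w hw M hM
      refine ⟨M, le_rfl, fun m => D.fin0 m, fun x hx => ?_⟩
      rw [seg_of_le _ le_rfl]
      simp only [id_eq, pow_zero]
      rw [abs_le]
      constructor <;> [linarith [hx.1, hw.2]; linarith [hx.2, hw.1]]
  | succ k ih =>
      intro w hw M hM
      rcases le_or_gt w (1/2) with hwhalf | hwhalf
      · obtain ⟨i, hiM, j0, hj0⟩ := hH0 M
        obtain ⟨K, hK, δ', hδ'⟩ := ih (2*w) ⟨by linarith [hw.1], by linarith⟩ (i+1)
          (by omega)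
        refine ⟨K, by omega, Function.update (fun m => if m < i then qdig m else δ' m) i j0,
          fun x hx => ?_⟩
        set δ := Function.update (fun m => if m < i then qdig m else δ' m) i j0 with hδdef
        have hMi : M ≤ i := hiM
        have h1 : D.seg δ M K = D.seg δ M i ∘ D.seg δ i K := seg_comp δ hMi (by omega)
        have h2 : D.seg δ i K = D.seg δ i (i+1) ∘ D.seg δ (i+1) K :=
          seg_comp δ (by omega) (by omega)
        have hid : D.seg δ M i = id := by
          apply seg_id_of_lam1
          intro m hm1 hm2
          have hne : m ≠ i := by omega
          have : δ m = qdig m := by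
            rw [hδdef, Function.update_of_ne hne, if_pos hm2]
          rw [this]
          exact lam_of_Q (qdig_mem m (by omega))
        have hcontr : D.seg δ i (i+1) = lam0 := by
          rw [seg_succ δ le_rfl, seg_of_le δ le_rfl]
          have : δ i = j0 := Function.update_self _ _ _
          rw [this, lam_of_H0 hj0]
          rfl
        have htail : D.seg δ (i+1) K = D.seg δ' (i+1) K := by
          apply seg_congr
          intro m hm1 hm2
          have hne : m ≠ i := by omega
          rw [hδdef, Function.update_of_ne hne, if_neg (by omega)]
        rw [h1, h2, hid, hcontr, htail]
        simp only [Function.comp_apply, id_eq, lam0]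
        have := hδ' x hx
        calc |D.seg δ' (i+1) K x / 2 - w| = |D.seg δ' (i+1) K x - 2*w| / 2 := by
              rw [show D.seg δ' (i+1) K x / 2 - w = (D.seg δ' (i+1) K x - 2*w) / 2 by ring,
                abs_div, abs_two]
          _ ≤ (1/2)^k / 2 := by linarith [abs_nonneg (D.seg δ' (i+1) K x - 2*w)]
          _ = (1/2)^(k+1) := by ring
      · obtain ⟨i, hiM, j2, hj2⟩ := hH2 M
        obtain ⟨K, hK, δ', hδ'⟩ := ih (2*w - 1) ⟨by linarith, by linarith [hw.2]⟩ (i+1)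
          (by omega)
        refine ⟨K, by omega, Function.update (fun m => if m < i then qdig m else δ' m) i j2,
          fun x hx => ?_⟩
        set δ := Function.update (fun m => if m < i then qdig m else δ' m) i j2 with hδdef
        have hMi : M ≤ i := hiM
        have h1 : D.seg δ M K = D.seg δ M i ∘ D.seg δ i K := seg_comp δ hMi (by omega)
        have h2 : D.seg δ i K = D.seg δ i (i+1) ∘ D.seg δ (i+1) K :=
          seg_comp δ (by omega) (by omega)
        have hid : D.seg δ M i = id := by
          apply seg_id_of_lam1
          intro m hm1 hm2
          have hne : m ≠ i := by omega
          have : δ m = qdig m := by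
            rw [hδdef, Function.update_of_ne hne, if_pos hm2]
          rw [this]
          exact lam_of_Q (qdig_mem m (by omega))
        have hcontr : D.seg δ i (i+1) = lam2 := by
          rw [seg_succ δ le_rfl, seg_of_le δ le_rfl]
          have : δ i = j2 := Function.update_self _ _ _
          rw [this, lam_of_H2 hj2]
          rfl
        have htail : D.seg δ (i+1) K = D.seg δ' (i+1) K := by
          apply seg_congr
          intro m hm1 hm2
          have hne : m ≠ i := by omega
          rw [hδdef, Function.update_of_ne hne, if_neg (by omega)]
        rw [h1, h2, hid, hcontr, htail]
        simp only [Function.comp_apply, id_eq, lam2]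
        have := hδ' x hx
        calc |D.seg δ' (i+1) K x / 2 + 1/2 - w| = |D.seg δ' (i+1) K x - (2*w - 1)| / 2 := by
              rw [show D.seg δ' (i+1) K x / 2 + 1/2 - w = (D.seg δ' (i+1) K x - (2*w - 1)) / 2
                by ring, abs_div, abs_two]
          _ ≤ (1/2)^k / 2 := by linarith [abs_nonneg (D.seg δ' (i+1) K x - (2*w - 1))]
          _ = (1/2)^(k+1) := by ring

/-- Cylinder neighbourhoods form a basis in `Sigma`. -/
lemma exists_cylinder_subset {β : D.Sigma} {s : Set D.Sigma} (hs : s ∈ 𝓝 β) :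
    ∃ M : ℕ, {γ : D.Sigma | ∀ i < M, γ i = β i} ⊆ s := by
  rw [nhds_pi, Filter.mem_pi] at hs
  obtain ⟨I, hIfin, t, ht, hsub⟩ := hs
  obtain ⟨b, hb⟩ := hIfin.bddAbove
  refine ⟨b + 1, fun γ hγ => hsub fun i hi => ?_⟩
  have : γ i = β i := hγ i (Nat.lt_succ_of_le (hb hi))
  rw [this]
  exact mem_of_mem_nhds (ht i)

lemma isOpen_cylinder (β : D.Sigma) (N : ℕ) :
    IsOpen {γ : D.Sigma | ∀ i < N, γ i = β i} := by
  have heq : {γ : D.Sigma | ∀ i < N, γ i = β i}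
      = ⋂ i ∈ Finset.range N, {γ : D.Sigma | γ i = β i} := by
    ext γ; simp [Finset.mem_range]
  rw [heq]
  apply isOpen_biInter_finset
  intro i _
  show IsOpen ((fun γ : D.Sigma => γ i) ⁻¹' {β i})
  exact IsOpen.preimage (continuous_apply i) (isOpen_discrete _)

end FAData

namespace FASystem
variable (S : FASystem)

open FAData

lemma orbit_val (x : S.toFAData.X) {z : ℝ} (hz : z ∈ Set.Icc (0:ℝ) 1)
    (hxz : (x : S.toFAData.Sigma × ℝ).2 = phi (x : S.toFAData.Sigma × ℝ).1 z) (n : ℕ) :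
    ((S.T^[n] x : S.toFAData.X) : S.toFAData.Sigma × ℝ)
      = (S.toFAData.addOne^[n] (x : S.toFAData.Sigma × ℝ).1,
          phi (S.toFAData.addOne^[n] (x : S.toFAData.Sigma × ℝ).1) z) := by
  set α := (x : S.toFAData.Sigma × ℝ).1 with hα
  induction n with
  | zero =>
      simp only [Function.iterate_zero, id_eq]
      exact Prod.ext rfl hxz
  | succ n ih =>
      set γ := S.toFAData.addOne^[n] α with hγ
      have hx' : S.T^[n] x = ⟨(γ, phi γ z), phi_mem_X γ hz⟩ := Subtype.ext ih
      rw [Function.iterate_succ_apply', hx']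
      have := S.hT γ z (phi γ z) (phi (S.toFAData.addOne γ) z) hz
        (phi_tendsto γ hz) (phi_tendsto (S.toFAData.addOne γ) hz) (phi_mem_X γ hz)
      rw [this, Function.iterate_succ_apply']

end FASystem


open FAData

/-- A Floyd–Auslander system is minimal iff there are infinitely
many `n` with `|H₀(n)| > 0` and infinitely many `m` with `|H₂(m)| > 0`. -/
theorem floyd_auslander_minimal_iff (S : FASystem) :
    S.Minimal ↔
      ({n : ℕ | 0 < (S.toFAData.H0 n).ncard}.Infinite ∧
        {m : ℕ | 0 < (S.toFAData.H2 m).ncard}.Infinite) := by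
  set D := S.toFAData with hD
  -- Q is nonempty from some index on
  obtain ⟨N₀, hQ⟩ : ∃ N₀ : ℕ, ∀ i, N₀ ≤ i → (D.Q i).Nonempty := by
    obtain ⟨b, hb⟩ := S.Qfin.bddAbove
    refine ⟨b + 1, fun i hi => Set.nonempty_iff_ne_empty.mpr fun h => ?_⟩
    have := hb (Set.mem_setOf.mpr h)
    omega
  have h01 : (0:ℝ) ∈ Set.Icc (0:ℝ) 1 := by norm_num
  have h11 : (1:ℝ) ∈ Set.Icc (0:ℝ) 1 := by norm_num
  constructor
  · -- minimal → both infinite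
    intro hmin
    constructor
    · -- infinitely many H0
      by_contra hfin
      have hfin' : {n : ℕ | 0 < (D.H0 n).ncard}.Finite := Set.not_infinite.mp hfin
      obtain ⟨b0, hb0⟩ := hfin'.bddAbove
      set N₁ := b0 + 1 with hN₁
      have hno0 : ∀ i, N₁ ≤ i → ∀ j : Fin (D.p i), D.lam i j ≠ lam0 := by
        intro i hi j hc
        have hne : (D.H0 i).Nonempty := ⟨j, hc⟩
        have : 0 < (D.H0 i).ncard := (Set.ncard_pos (D.H0 i).toFinite).mpr hne
        have := hb0 (Set.mem_setOf.mpr this)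
        omega
      set N := max N₁ N₀ with hN
      set α : D.Sigma := fun i => if h : N₀ ≤ i then (hQ i h).some else D.fin0 i with hαdef
      have hαQ : ∀ i, N₀ ≤ i → D.lam i (α i) = lam1 := by
        intro i hi
        have : α i = (hQ i hi).some := by rw [hαdef]; simp [dif_pos hi]
        rw [this]
        exact (hQ i hi).some_mem
      -- for any γ agreeing with no-lam0 tail, the value at 1 only depends on first N₁ digits
      have hfix1 : ∀ γ : D.Sigma, ∀ m, D.seg γ N₁ m 1 = 1 := by
        intro γ m
        induction m with
        | zero => rfl
        | succ m ih =>
            rcases le_or_gt N₁ m with hm | hm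
            · rw [seg_succ γ hm, Function.comp_apply]
              have h1 : D.lam m (γ m) 1 = 1 := by
                rcases D.hlam m (γ m) with h | h | h
                · exact absurd h (hno0 m hm (γ m))
                · rw [h]; rfl
                · rw [h]; norm_num [lam2]
              rw [h1, ih]
            · rw [seg_of_le γ hm]; rfl
      have hphi1 : ∀ γ : D.Sigma, phi γ 1 = D.seg γ 0 N₁ 1 := by
        intro γ
        rw [phi_factor γ N₁ h11]
        congr 1
        have : Tendsto (fun m => D.seg γ N₁ m 1) atTop (𝓝 1) := by
          simp only [hfix1]; exact tendsto_const_nhds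
        exact tendsto_nhds_unique (segPhi_tendsto γ N₁ h11) this
      set ytop := phi α 1 with hytop
      set ybot := phi α 0 with hybot
      have hbot_eq : ybot = D.seg α 0 N 0 := by
        rw [hybot, phi_factor α N h01]
        congr 1
        have hsegid : ∀ m, D.seg α N m = id := by
          intro m
          apply seg_id_of_lam1
          intro i hi1 _
          exact hαQ i (le_trans (le_max_right _ _) hi1)
        have : Tendsto (fun m => D.seg α N m 0) atTop (𝓝 0) := by
          simp only [hsegid]; exact tendsto_const_nhds
        exact tendsto_nhds_unique (segPhi_tendsto α N h01) this
      have htop_eq : ytop = D.seg α 0 N 1 := by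
        rw [hytop, phi_factor α N h11]
        congr 1
        have hsegid : ∀ m, D.seg α N m = id := by
          intro m
          apply seg_id_of_lam1
          intro i hi1 _
          exact hαQ i (le_trans (le_max_right _ _) hi1)
        have : Tendsto (fun m => D.seg α N m 1) atTop (𝓝 1) := by
          simp only [hsegid]; exact tendsto_const_nhds
        exact tendsto_nhds_unique (segPhi_tendsto α N h11) this
      have hgap : ytop - ybot = D.A α 0 N := by rw [htop_eq, hbot_eq]; rfl
      have hgap_pos : 0 < D.A α 0 N := A_pos α 0 N
      -- the point whose orbit we follow
      set x₀ : D.X := ⟨(α, ytop), phi_mem_X α h11⟩ with hx₀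
      have hdense := hmin x₀
      set W : Set (D.Sigma × ℝ) :=
        {γ : D.Sigma | ∀ i < N, γ i = α i} ×ˢ Metric.ball ybot (D.A α 0 N / 2) with hW
      have hWopen : IsOpen W := (isOpen_cylinder α N).prod Metric.isOpen_ball
      set U : Set D.X := Subtype.val ⁻¹' W with hU
      have hUopen : IsOpen U := hWopen.preimage continuous_subtype_val
      have hUne : U.Nonempty := by
        refine ⟨⟨(α, ybot), phi_mem_X α h01⟩, ?_⟩
        constructor
        · intro i _; rfl
        · simp [Metric.mem_ball, hgap_pos]
      obtain ⟨q, hqU, hqr⟩ := dense_iff_inter_open.mp hdense U hUopen hUne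
      obtain ⟨n, hn⟩ := hqr
      have hqval : (q : D.Sigma × ℝ) = (D.addOne^[n] α, phi (D.addOne^[n] α) 1) := by
        rw [← hn]
        exact S.orbit_val x₀ h11 rfl n
      set γ := D.addOne^[n] α with hγ
      have hqW : (q : D.Sigma × ℝ) ∈ W := hqU
      rw [hqval] at hqW
      obtain ⟨hcyl, hballm⟩ := hqW
      have hγtop : phi γ 1 = ytop := by
        rw [hytop, hphi1 γ, hphi1 α]
        have hc : D.seg γ 0 N₁ = D.seg α 0 N₁ := by
          apply seg_congr
          intro i _ hi2
          exact hcyl i (lt_of_lt_of_le hi2 (le_max_left N₁ N₀))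
        rw [hc]
      have hballm' : |ytop - ybot| < D.A α 0 N / 2 := by
        simpa [Real.dist_eq, hγtop] using hballm
      have habs : |ytop - ybot| = D.A α 0 N := by rw [hgap]; exact abs_of_pos hgap_pos
      linarith [hballm', habs, hgap_pos]
    · -- infinitely many H2 : symmetric, use the fixed point 0
      by_contra hfin
      have hfin' : {n : ℕ | 0 < (D.H2 n).ncard}.Finite := Set.not_infinite.mp hfin
      obtain ⟨b0, hb0⟩ := hfin'.bddAbove
      set N₁ := b0 + 1 with hN₁
      have hno2 : ∀ i, N₁ ≤ i → ∀ j : Fin (D.p i), D.lam i j ≠ lam2 := by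
        intro i hi j hc
        have hne : (D.H2 i).Nonempty := ⟨j, hc⟩
        have : 0 < (D.H2 i).ncard := (Set.ncard_pos (D.H2 i).toFinite).mpr hne
        have := hb0 (Set.mem_setOf.mpr this)
        omega
      set N := max N₁ N₀ with hN
      set α : D.Sigma := fun i => if h : N₀ ≤ i then (hQ i h).some else D.fin0 i with hαdef
      have hαQ : ∀ i, N₀ ≤ i → D.lam i (α i) = lam1 := by
        intro i hi
        have : α i = (hQ i hi).some := by rw [hαdef]; simp [dif_pos hi]
        rw [this]
        exact (hQ i hi).some_mem
      have hfix0 : ∀ γ : D.Sigma, ∀ m, D.seg γ N₁ m 0 = 0 := by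
        intro γ m
        induction m with
        | zero => rfl
        | succ m ih =>
            rcases le_or_gt N₁ m with hm | hm
            · rw [seg_succ γ hm, Function.comp_apply]
              have h1 : D.lam m (γ m) 0 = 0 := by
                rcases D.hlam m (γ m) with h | h | h
                · rw [h]; norm_num [lam0]
                · rw [h]; rfl
                · exact absurd h (hno2 m hm (γ m))
              rw [h1, ih]
            · rw [seg_of_le γ hm]; rfl
      have hphi0 : ∀ γ : D.Sigma, phi γ 0 = D.seg γ 0 N₁ 0 := by
        intro γ
        rw [phi_factor γ N₁ h01]
        congr 1
        have : Tendsto (fun m => D.seg γ N₁ m 0) atTop (𝓝 0) := by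
          simp only [hfix0]; exact tendsto_const_nhds
        exact tendsto_nhds_unique (segPhi_tendsto γ N₁ h01) this
      set ytop := phi α 1 with hytop
      set ybot := phi α 0 with hybot
      have hbot_eq : ybot = D.seg α 0 N 0 := by
        rw [hybot, phi_factor α N h01]
        congr 1
        have hsegid : ∀ m, D.seg α N m = id := by
          intro m
          apply seg_id_of_lam1
          intro i hi1 _
          exact hαQ i (le_trans (le_max_right _ _) hi1)
        have : Tendsto (fun m => D.seg α N m 0) atTop (𝓝 0) := by
          simp only [hsegid]; exact tendsto_const_nhds
        exact tendsto_nhds_unique (segPhi_tendsto α N h01) this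
      have htop_eq : ytop = D.seg α 0 N 1 := by
        rw [hytop, phi_factor α N h11]
        congr 1
        have hsegid : ∀ m, D.seg α N m = id := by
          intro m
          apply seg_id_of_lam1
          intro i hi1 _
          exact hαQ i (le_trans (le_max_right _ _) hi1)
        have : Tendsto (fun m => D.seg α N m 1) atTop (𝓝 1) := by
          simp only [hsegid]; exact tendsto_const_nhds
        exact tendsto_nhds_unique (segPhi_tendsto α N h11) this
      have hgap : ytop - ybot = D.A α 0 N := by rw [htop_eq, hbot_eq]; rfl
      have hgap_pos : 0 < D.A α 0 N := A_pos α 0 N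
      set x₀ : D.X := ⟨(α, ybot), phi_mem_X α h01⟩ with hx₀
      have hdense := hmin x₀
      set W : Set (D.Sigma × ℝ) :=
        {γ : D.Sigma | ∀ i < N, γ i = α i} ×ˢ Metric.ball ytop (D.A α 0 N / 2) with hW
      have hWopen : IsOpen W := (isOpen_cylinder α N).prod Metric.isOpen_ball
      set U : Set D.X := Subtype.val ⁻¹' W with hU
      have hUopen : IsOpen U := hWopen.preimage continuous_subtype_val
      have hUne : U.Nonempty := by
        refine ⟨⟨(α, ytop), phi_mem_X α h11⟩, ?_⟩
        constructor
        · intro i _; rfl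
        · simp [Metric.mem_ball, hgap_pos]
      obtain ⟨q, hqU, hqr⟩ := dense_iff_inter_open.mp hdense U hUopen hUne
      obtain ⟨n, hn⟩ := hqr
      have hqval : (q : D.Sigma × ℝ) = (D.addOne^[n] α, phi (D.addOne^[n] α) 0) := by
        rw [← hn]
        exact S.orbit_val x₀ h01 rfl n
      set γ := D.addOne^[n] α with hγ
      have hqW : (q : D.Sigma × ℝ) ∈ W := hqU
      rw [hqval] at hqW
      obtain ⟨hcyl, hballm⟩ := hqW
      have hγbot : phi γ 0 = ybot := by
        rw [hybot, hphi0 γ, hphi0 α]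
        have hc : D.seg γ 0 N₁ = D.seg α 0 N₁ := by
          apply seg_congr
          intro i _ hi2
          exact hcyl i (lt_of_lt_of_le hi2 (le_max_left N₁ N₀))
        rw [hc]
      have hballm' : |ybot - ytop| < D.A α 0 N / 2 := by
        simpa [Real.dist_eq, hγbot] using hballm
      have habs : |ybot - ytop| = D.A α 0 N := by
        rw [abs_sub_comm, hgap]
        exact abs_of_pos hgap_pos
      linarith [hballm', habs, hgap_pos]
  · -- both infinite → minimal
    rintro ⟨h0, h2⟩ x
    have hH0 : ∀ M, ∃ i, M ≤ i ∧ (D.H0 i).Nonempty := by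
      intro M
      obtain ⟨i, hi, hMi⟩ := h0.exists_gt M
      have hpos : 0 < (D.H0 i).ncard := hi
      exact ⟨i, le_of_lt hMi, Set.nonempty_of_ncard_ne_zero (by omega)⟩
    have hH2 : ∀ M, ∃ i, M ≤ i ∧ (D.H2 i).Nonempty := by
      intro M
      obtain ⟨i, hi, hMi⟩ := h2.exists_gt M
      have hpos : 0 < (D.H2 i).ncard := hi
      exact ⟨i, le_of_lt hMi, Set.nonempty_of_ncard_ne_zero (by omega)⟩
    rw [dense_iff_inter_open]
    intro U hUopen hUne
    obtain ⟨u, hu⟩ := hUne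
    obtain ⟨V, hVopen, hVU⟩ := isOpen_induced_iff.mp hUopen
    have huV : (u : D.Sigma × ℝ) ∈ V := by rw [← hVU] at hu; exact hu
    set β := (u : D.Sigma × ℝ).1 with hβ
    set w := (u : D.Sigma × ℝ).2 with hw
    have hVnhds : V ∈ 𝓝 (β, w) := by
      rw [show (β, w) = (u : D.Sigma × ℝ) from Prod.mk.eta]
      exact hVopen.mem_nhds huV
    obtain ⟨sN, hsN, tN, htN, hsub⟩ := mem_nhds_prod_iff.mp hVnhds
    obtain ⟨M₁, hM₁⟩ := exists_cylinder_subset hsN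
    obtain ⟨ε, hε, hball⟩ := Metric.mem_nhds_iff.mp htN
    obtain ⟨k, hk⟩ := exists_pow_lt_of_lt_one hε (by norm_num : (1/2 : ℝ) < 1)
    set M := max M₁ N₀ with hM
    -- the target value
    obtain ⟨z', hz', htw⟩ := u.2
    have hwphi : w = phi β z' := tendsto_nhds_unique htw (phi_tendsto β hz')
    set wM := segPhi β M z' with hwM
    have hwM_mem : wM ∈ Set.Icc (0:ℝ) 1 := segPhi_mem β M hz'
    have hwfac : w = D.seg β 0 M wM := by rw [hwphi, phi_factor β M hz']
    -- design a block
    obtain ⟨K, hMK, δ, hδ⟩ := design hH0 hH2 hQ k wM hwM_mem M (le_max_right _ _)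
    -- the pattern to hit
    set β' : D.Sigma := fun i => if i < M then β i else δ i with hβ'
    -- the starting point
    obtain ⟨z, hz, htx⟩ := x.2
    set α := (x : D.Sigma × ℝ).1 with hα
    have hxz : (x : D.Sigma × ℝ).2 = phi α z := tendsto_nhds_unique htx (phi_tendsto α hz)
    obtain ⟨n, hn⟩ := exists_iterate_agree α β' K
    set γ := D.addOne^[n] α with hγ
    have hγβ : ∀ i < M, γ i = β i := by
      intro i hi
      have := hn i (lt_of_lt_of_le hi hMK)
      rw [this, hβ']
      simp [hi]
    have hγδ : ∀ i, M ≤ i → i < K → γ i = δ i := by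
      intro i hi1 hi2
      have := hn i hi2
      rw [this, hβ']
      simp [Nat.not_lt.mpr hi1]
    -- the orbit point
    refine ⟨S.T^[n] x, ?_, ⟨n, rfl⟩⟩
    have hqval : ((S.T^[n] x : D.X) : D.Sigma × ℝ) = (γ, phi γ z) :=
      S.orbit_val x hz hxz n
    rw [← hVU]
    show ((S.T^[n] x : D.X) : D.Sigma × ℝ) ∈ V
    rw [hqval]
    apply hsub
    constructor
    · -- first coordinate in sN
      apply hM₁
      intro i hi
      exact hγβ i (lt_of_lt_of_le hi (le_max_left _ _))
    · -- second coordinate in tN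
      apply hball
      rw [Metric.mem_ball, Real.dist_eq]
      -- factor phi γ z
      set t' := segPhi γ K z with ht'
      have ht'_mem : t' ∈ Set.Icc (0:ℝ) 1 := segPhi_mem γ K hz
      have hfac1 : phi γ z = D.seg γ 0 M (segPhi γ M z) := phi_factor γ M hz
      have hfac2 : segPhi γ M z = D.seg γ M K t' := segPhi_factor γ hMK hz
      have hseg1 : D.seg γ 0 M = D.seg β 0 M :=
        seg_congr fun i _ hi2 => hγβ i hi2
      have hseg2 : D.seg γ M K = D.seg δ M K :=
        seg_congr fun i hi1 hi2 => hγδ i hi1 hi2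
      have hest : |D.seg δ M K t' - wM| ≤ (1/2)^k := hδ t' ht'_mem
      obtain ⟨a, b, ha, ha1, hab⟩ := seg_affine β 0 M
      have : phi γ z - w = a * (D.seg δ M K t' - wM) := by
        rw [hfac1, hfac2, hseg1, hseg2, hwfac, hab, hab]
        ring
      rw [this, abs_mul, abs_of_pos ha]
      have habs : |D.seg δ M K t' - wM| ≤ (1/2)^k := hest
      nlinarith [abs_nonneg (D.seg δ M K t' - wM)]
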